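/- arXiv:1210.0910 — 3 statements merged into one kernel-verified Lean document; each statement's English description precedes it below -/
import Mathlib

section
/- Let (P, ρ, ζ̄) be an Eulerian quasi-graded poset, meaning Σ_{x ≤ y ≤ z} (−1)^{ρ(x,y)} ζ̄(x,y) ζ̄(y,z) = 0 for all x < z in P. Then the ab-index Ψ(P, ρ, ζ̄) can be written as a polynomial in c = a+b and d = ab+ba with integer coefficients. -/
open scoped TensorProduct
open scoped Classical

noncomputable section

abbrev Alg : Type := MonoidAlgebra ℤ (FreeMonoid Bool)

def va : Alg := MonoidAlgebra.of ℤ (FreeMonoid Bool) (FreeMonoid.of false)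
def vb : Alg := MonoidAlgebra.of ℤ (FreeMonoid Bool) (FreeMonoid.of true)

def monoOf (l : List Bool) : Alg := MonoidAlgebra.of ℤ (FreeMonoid Bool) (FreeMonoid.ofList l)

def toF (x : Alg) : FreeMonoid Bool →₀ ℤ := x.coeff

/-- The weight of a chain encoded as a strictly increasing map `f : Fin (k+1) → P`. -/
def wtChain {P : Type} (ρ : P → ℕ) {k : ℕ} (f : Fin (k+1) → P) : Alg :=
  (List.ofFn (fun i : Fin k =>
    (va - vb) ^ (ρ (f i.succ) - ρ (f i.castSucc) - 1) *
      (if (i : ℕ) + 1 < k then vb else 1))).prod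

def zetaChain {P : Type} (zb : P → P → ℤ) {k : ℕ} (f : Fin (k+1) → P) : ℤ :=
  ∏ i : Fin k, zb (f i.castSucc) (f i.succ)

/-- The ab-index of the interval `[lo, hi]` of a quasi-graded poset `(P, ρ, zb)`. -/
def PsiI {P : Type} [Fintype P] [PartialOrder P] (ρ : P → ℕ) (zb : P → P → ℤ)
    (lo hi : P) : Alg :=
  ∑ k ∈ Finset.range (Fintype.card P + 1),
    ∑ f : Fin (k+1) → P,
      if StrictMono f ∧ f 0 = lo ∧ f (Fin.last k) = hi
      then zetaChain zb f • wtChain ρ f else 0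

/-- The algebra map `κ` with `κ(a) = a - b`, `κ(b) = 0`. -/
def kappa : Alg →ₐ[ℤ] Alg :=
  MonoidAlgebra.lift ℤ Alg (FreeMonoid Bool)
    (FreeMonoid.lift (fun s => if s then 0 else va - vb))

/-- The algebra map `λ̄` with `λ̄(a) = 0`, `λ̄(b) = a - b`. -/
def lambdabar : Alg →ₐ[ℤ] Alg :=
  MonoidAlgebra.lift ℤ Alg (FreeMonoid Bool)
    (FreeMonoid.lift (fun s => if s then va - vb else 0))

/-- `η` on monomials: `b^m a^k ↦ 2 (a-b)^(m+k)`, other monomials to `0`. -/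
def etaMon (w : FreeMonoid Bool) : Alg :=
  if ∃ m k : ℕ, FreeMonoid.toList w = List.replicate m true ++ List.replicate k false
  then (2 : ℤ) • (va - vb) ^ (FreeMonoid.toList w).length else 0

def etaOp (x : Alg) : Alg := (toF x).sum fun w c => c • etaMon w

/-- The letter-deletion coproduct on `Z⟨a,b⟩`. -/
def Delta (x : Alg) : Alg ⊗[ℤ] Alg :=
  (toF x).sum fun w c => c •
    ∑ i ∈ Finset.range (FreeMonoid.toList w).length,
      monoOf ((FreeMonoid.toList w).take i) ⊗ₜ[ℤ] monoOf ((FreeMonoid.toList w).drop (i+1))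

/-- The Sweedler-style convolution `x ↦ Σ F(x₍₁₎) · b · G(x₍₂₎)`. -/
def sweedler (F G : Alg → Alg) (x : Alg) : Alg :=
  (toF x).sum fun w c => c •
    ∑ i ∈ Finset.range (FreeMonoid.toList w).length,
      F (monoOf ((FreeMonoid.toList w).take i)) * vb *
        G (monoOf ((FreeMonoid.toList w).drop (i+1)))

/-- `phiAux n = φ_{n+1}`, defined by `φ₁ = κ` and `φ_{k+1}(w) = Σ φ_k(w₍₁₎) · b · η(w₍₂₎)`. -/
def phiAux : ℕ → Alg → Alg
  | 0 => fun x => kappa x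
  | (n+1) => fun x => sweedler (phiAux n) etaOp x

def maxLen (x : Alg) : ℕ := (toF x).support.sup fun w => (FreeMonoid.toList w).length

/-- The operator `φ = Σ_{k ≥ 1} φ_k` (the sum is finite on any given polynomial). -/
def phi (x : Alg) : Alg := ∑ k ∈ Finset.range (maxLen x + 1), phiAux k x

/-- `ω` on a monomial: replace each occurrence of `ab` by `2d` and remaining letters by `c`. -/
def omegaList : List Bool → Alg
  | [] => 1
  | false :: true :: rest => ((2:ℤ) • (va * vb + vb * va)) * omegaList rest
  | _ :: rest => (va + vb) * omegaList rest

def omegaOp (x : Alg) : Alg := (toF x).sum fun w c => c • omegaList (FreeMonoid.toList w)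

/-- The operator `G(w) = φ(w)·b + Σ φ(w₍₁₎)·b·λ̄(w₍₂₎)·(a-b)`. -/
def Gop (w : Alg) : Alg := phi w * vb + sweedler phi (fun y => lambdabar y) w * (va - vb)

/-- The reversal map `u ↦ u*` reading each monomial backwards. -/
def revOp (x : Alg) : Alg :=
  (toF x).sum fun w c =>
    MonoidAlgebra.single (FreeMonoid.ofList (FreeMonoid.toList w).reverse) c

/-- `H'` deletes the last letter of each monomial, `H'(1) = 0`. -/
def Hp (x : Alg) : Alg :=
  (toF x).sum fun w c => if w = 1 then 0 else c • monoOf ((FreeMonoid.toList w).dropLast)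


namespace CD

def ee : Alg := va - vb
def cc : Alg := va + vb
def dd : Alg := va * vb + vb * va
def S : Subalgebra ℤ Alg := Algebra.adjoin ℤ ({va + vb, va * vb + vb * va} : Set Alg)

def sigma : Alg →ₐ[ℤ] Alg :=
  MonoidAlgebra.lift ℤ Alg (FreeMonoid Bool)
    (FreeMonoid.lift (fun s => if s then va else vb))

lemma sigma_va : sigma va = vb := by
  simp [sigma, va, MonoidAlgebra.lift_of]

lemma sigma_vb : sigma vb = va := by
  simp [sigma, vb, MonoidAlgebra.lift_of]

lemma cc_mem : cc ∈ S := Algebra.subset_adjoin (Set.mem_insert _ _)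
lemma dd_mem : dd ∈ S := Algebra.subset_adjoin (Set.mem_insert_of_mem _ rfl)

lemma sigma_fix {s : Alg} (hs : s ∈ S) : sigma s = s := by
  induction hs using Algebra.adjoin_induction with
  | mem x hx =>
    rcases hx with h | h
    · subst h; simp [map_add, sigma_va, sigma_vb, add_comm]
    · simp only [Set.mem_singleton_iff] at h; subst h
      simp [map_add, map_mul, sigma_va, sigma_vb, add_comm]
  | algebraMap r => exact AlgHom.commutes _ r
  | add x y _ _ hx hy => rw [map_add, hx, hy]
  | mul x y _ _ hx hy => rw [map_mul, hx, hy]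

lemma ee_sq_mem : ee * ee ∈ S := by
  have : ee * ee = cc * cc - 2 • dd := by
    simp only [ee, cc, dd]; noncomm_ring
  rw [this]
  exact S.sub_mem (S.mul_mem cc_mem cc_mem) (S.smul_mem dd_mem 2)

lemma ee_mul_vb : ee * vb = dd - vb * cc := by
  simp only [ee, cc, dd]; noncomm_ring

lemma ee_ne_zero : ee ≠ 0 := by
  intro h
  have h2 : (va - vb).coeff (FreeMonoid.of false) = 0 := by rw [show va - vb = ee from rfl, h]; rfl
  rw [MonoidAlgebra.coeff_sub, Finsupp.sub_apply] at h2
  have hva : va.coeff (FreeMonoid.of false) = 1 := by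
    simp [va, MonoidAlgebra.of_apply, MonoidAlgebra.coeff_single, Finsupp.single_apply]
  have hvb : vb.coeff (FreeMonoid.of false) = 0 := by
    simp only [vb, MonoidAlgebra.of_apply, MonoidAlgebra.coeff_single]
    rw [Finsupp.single_apply, if_neg]
    intro hh
    exact Bool.noConfusion (FreeMonoid.of_injective hh)
  rw [hva, hvb] at h2; omega

def InV (u : Alg) : Prop :=
  ∃ s₀ s₁ s₂ : Alg, s₀ ∈ S ∧ s₁ ∈ S ∧ s₂ ∈ S ∧ u = s₀ + ee * s₁ + vb * s₂

lemma InV.zero : InV 0 := ⟨0, 0, 0, S.zero_mem, S.zero_mem, S.zero_mem, by simp⟩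

lemma InV.add {u v : Alg} (hu : InV u) (hv : InV v) : InV (u + v) := by
  obtain ⟨a0, a1, a2, ha0, ha1, ha2, rfl⟩ := hu
  obtain ⟨b0, b1, b2, hb0, hb1, hb2, rfl⟩ := hv
  exact ⟨a0 + b0, a1 + b1, a2 + b2, S.add_mem ha0 hb0, S.add_mem ha1 hb1, S.add_mem ha2 hb2, by
    rw [mul_add, mul_add]; abel⟩

lemma InV.zsmul (z : ℤ) {u : Alg} (hu : InV u) : InV (z • u) := by
  obtain ⟨a0, a1, a2, ha0, ha1, ha2, rfl⟩ := hu
  exact ⟨z • a0, z • a1, z • a2, S.smul_mem ha0 z, S.smul_mem ha1 z, S.smul_mem ha2 z, by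
    rw [smul_add, smul_add, mul_smul_comm, mul_smul_comm]⟩

lemma InV.sum {ι : Type*} (t : Finset ι) (f : ι → Alg) (h : ∀ i ∈ t, InV (f i)) :
    InV (∑ i ∈ t, f i) := by
  classical
  induction t using Finset.induction_on with
  | empty => simpa using InV.zero
  | @insert a s hx ih =>
    rw [Finset.sum_insert hx]
    exact (h a (Finset.mem_insert_self a s)).add (ih fun i hi => h i (Finset.mem_insert_of_mem hi))

lemma inV_e_pow_mul : ∀ m, ∀ {s : Alg}, s ∈ S → InV (ee ^ m * s) := by
  intro m
  induction m using Nat.strong_induction_on with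
  | _ m ih =>
    match m with
    | 0 => exact fun {s} hs => ⟨s, 0, 0, hs, S.zero_mem, S.zero_mem, by simp⟩
    | 1 => exact fun {s} hs => ⟨0, s, 0, S.zero_mem, hs, S.zero_mem, by simp [pow_one]⟩
    | (m+2) =>
      intro s hs
      have h2 : ee ^ (m + 2) * s = ee ^ m * (ee * ee * s) := by
        rw [pow_add, pow_two]; noncomm_ring
      rw [h2]
      exact ih m (by omega) (S.mul_mem ee_sq_mem hs)

lemma inV_e_pow_mul_vb_mul : ∀ m, ∀ {s : Alg}, s ∈ S → InV (ee ^ m * (vb * s)) := by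
  intro m
  induction m with
  | zero => exact fun {s} hs => ⟨0, 0, s, S.zero_mem, S.zero_mem, hs, by simp⟩
  | succ m ih =>
    intro s hs
    have h2 : ee ^ (m + 1) * (vb * s) = ee ^ m * (dd * s) - ee ^ m * (vb * (cc * s)) := by
      rw [pow_succ, mul_assoc, ← mul_assoc ee vb s, ee_mul_vb]; noncomm_ring
    rw [h2, sub_eq_add_neg]
    refine InV.add (inV_e_pow_mul m (S.mul_mem dd_mem hs)) ?_
    have := ih (S.mul_mem cc_mem hs)
    obtain ⟨a0, a1, a2, h0, h1, hh2, he⟩ := this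
    exact ⟨-a0, -a1, -a2, S.neg_mem h0, S.neg_mem h1, S.neg_mem hh2, by
      rw [he]; noncomm_ring⟩
lemma mem_S_of_inV_sigma {u : Alg} (hu : InV u) (hsym : sigma u = u) : u ∈ S := by
  obtain ⟨s0, s1, s2, h0, h1, h2, rfl⟩ := hu
  have hσe : sigma ee = -ee := by
    simp only [ee, map_sub, sigma_va, sigma_vb]; abel
  have hexp : sigma (s0 + ee * s1 + vb * s2) = s0 + (-ee) * s1 + (ee + vb) * s2 := by
    rw [map_add, map_add, map_mul, map_mul, hσe, sigma_vb, sigma_fix h0, sigma_fix h1,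
      sigma_fix h2]
    congr 1
    simp only [ee]; noncomm_ring
  rw [hexp] at hsym
  have hz : (s0 + -ee * s1 + (ee + vb) * s2) - (s0 + ee * s1 + vb * s2) = 0 :=
    sub_eq_zero.mpr hsym
  have hkey : ee * (s2 - (s1 + s1)) = 0 := by
    rw [← hz]; noncomm_ring
  have h21 : s2 = s1 + s1 := by
    rcases mul_eq_zero.mp hkey with h | h
    · exact absurd h ee_ne_zero
    · exact sub_eq_zero.mp h
  have hfin : s0 + ee * s1 + vb * s2 = s0 + (va + vb) * s1 := by
    rw [h21]; simp only [ee]; noncomm_ring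
  rw [hfin]
  exact S.add_mem h0 (S.mul_mem cc_mem h1)

variable {P : Type} [Fintype P] [PartialOrder P] (ρ : P → ℕ) (zb : P → P → ℤ)

def layer (k : ℕ) (y z : P) : Alg :=
  ∑ f : Fin (k+1) → P,
    if StrictMono f ∧ f 0 = y ∧ f (Fin.last k) = z
    then zetaChain zb f • wtChain ρ f else 0

lemma psi_eq_layers (y z : P) :
    PsiI ρ zb y z = ∑ k ∈ Finset.range (Fintype.card P + 1), layer ρ zb k y z := rfl

lemma layer_zero (y z : P) : layer ρ zb 0 y z = if y = z then 1 else 0 := by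
  unfold layer
  rw [← (Equiv.funUnique (Fin 1) P).symm.sum_comp]
  have h1 : ∀ p : P, ((Equiv.funUnique (Fin 1) P).symm p : Fin 1 → P) = fun _ => p :=
    fun p => rfl
  simp only [h1]
  have hSM : ∀ p : P, StrictMono (fun _ => p : Fin (0+1) → P) := by
    intro p a b hab
    rw [Fin.lt_def] at hab
    have ha := a.isLt; have hb := b.isLt
    omega
  have h2 : ∀ p : P, (StrictMono (fun _ => p : Fin 1 → P) ∧ p = y ∧ p = z) ↔ (p = y ∧ p = z) := by
    intro p
    constructor
    · rintro ⟨-, h⟩; exact h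
    · intro h; exact ⟨hSM p, h⟩
  have h3 : (zetaChain zb (fun _ => (y : P) : Fin 1 → P)) = 1 := by
    simp [zetaChain]
  have h4 : (wtChain ρ (fun _ => (y : P) : Fin 1 → P)) = 1 := by
    simp [wtChain]
  by_cases hyz : y = z
  · subst hyz
    rw [if_pos rfl, Finset.sum_eq_single_of_mem y (Finset.mem_univ y)]
    · rw [if_pos ⟨hSM y, rfl, rfl⟩, h3, h4, one_smul]
    · intro p _ hp
      rw [if_neg]
      rintro ⟨-, rfl, -⟩; exact hp rfl
  · rw [if_neg hyz, Finset.sum_eq_zero]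
    intro p _
    rw [if_neg]
    rintro ⟨-, rfl, h⟩; exact hyz h

lemma layer_card (y z : P) : layer ρ zb (Fintype.card P) y z = 0 := by
  refine Finset.sum_eq_zero fun f _ => if_neg ?_
  rintro ⟨hSM, -, -⟩
  have := Fintype.card_le_of_injective f hSM.injective
  rw [Fintype.card_fin] at this
  omega

lemma layer_not_le {y z : P} (h : ¬ y ≤ z) (k : ℕ) : layer ρ zb k y z = 0 := by
  refine Finset.sum_eq_zero fun f _ => if_neg ?_
  rintro ⟨hSM, rfl, rfl⟩
  exact h (hSM.monotone (Fin.zero_le _))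

lemma psi_not_le {y z : P} (h : ¬ y ≤ z) : PsiI ρ zb y z = 0 := by
  rw [psi_eq_layers]
  exact Finset.sum_eq_zero fun k _ => layer_not_le ρ zb h k

lemma zeta_cons {k : ℕ} (y : P) (g : Fin (k+1) → P) :
    zetaChain zb (Fin.cons y g : Fin (k+2) → P) = zb y (g 0) * zetaChain zb g := by
  unfold zetaChain
  rw [Fin.prod_univ_succ]
  simp only [Fin.castSucc_zero, Fin.cons_zero, Fin.cons_succ, ← Fin.succ_castSucc]

lemma wt_cons {k : ℕ} (y : P) (g : Fin (k+1) → P) :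
    wtChain ρ (Fin.cons y g : Fin (k+2) → P)
      = ((va - vb) ^ (ρ (g 0) - ρ y - 1) * (if 0 < k then vb else 1)) * wtChain ρ g := by
  unfold wtChain
  rw [List.ofFn_succ, List.prod_cons]
  simp only [Fin.cons_succ, Fin.castSucc_zero, Fin.cons_zero, ← Fin.succ_castSucc,
    Fin.val_succ, Fin.val_zero]
  congr 1
  · simp only [show ((0:ℕ) + 1 < k + 1) ↔ (0 < k) from by omega]
  · exact congrArg List.prod (congrArg List.ofFn (funext fun j => by
      simp only [show ((j:ℕ) + 1 + 1 < k + 1) ↔ ((j:ℕ) + 1 < k) from by omega]))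

lemma strictMono_cons_iff {k : ℕ} {y : P} {g : Fin (k+1) → P} :
    StrictMono (Fin.cons y g : Fin (k+2) → P) ↔ y < g 0 ∧ StrictMono g := by
  rw [Fin.strictMono_iff_lt_succ, Fin.strictMono_iff_lt_succ]
  constructor
  · intro h
    refine ⟨?_, fun j => ?_⟩
    · have := h 0
      rwa [Fin.castSucc_zero, Fin.cons_zero, Fin.cons_succ] at this
    · have := h j.succ
      rwa [← Fin.succ_castSucc, Fin.cons_succ, Fin.cons_succ] at this
  · rintro ⟨h0, h⟩ i
    induction i using Fin.cases with
    | zero => rwa [Fin.castSucc_zero, Fin.cons_zero, Fin.cons_succ]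
    | succ j =>
      rw [← Fin.succ_castSucc, Fin.cons_succ, Fin.cons_succ]
      exact h j

lemma cons_last {k : ℕ} (y : P) (g : Fin (k+1) → P) :
    (Fin.cons y g : Fin (k+2) → P) (Fin.last (k+1)) = g (Fin.last k) := by
  rw [← Fin.succ_last, Fin.cons_succ]

lemma layer_succ (k : ℕ) (x z : P) :
    layer ρ zb (k+1) x z = ∑ y : P, if x < y then
      zb x y • ((va - vb) ^ (ρ y - ρ x - 1) * ((if 0 < k then vb else 1) * layer ρ zb k y z))
      else 0 := by
  have step1 : layer ρ zb (k+1) x z = ∑ y : P, ∑ g : Fin (k+1) → P,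
      if (y < g 0 ∧ StrictMono g) ∧ y = x ∧ g (Fin.last k) = z
      then (zb y (g 0) * zetaChain zb g) •
        (((va - vb) ^ (ρ (g 0) - ρ y - 1) * (if 0 < k then vb else 1)) * wtChain ρ g)
      else 0 := by
    rw [show layer ρ zb (k+1) x z = ∑ f : Fin (k+2) → P,
      (if StrictMono f ∧ f 0 = x ∧ f (Fin.last (k+1)) = z
       then zetaChain zb f • wtChain ρ f else 0) from rfl]
    rw [← (Fin.consEquiv (fun _ : Fin (k+2) => P)).sum_comp]
    rw [Fintype.sum_prod_type]
    refine Finset.sum_congr rfl fun y _ => Finset.sum_congr rfl fun g _ => ?_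
    have hc : ((Fin.consEquiv (fun _ : Fin (k+2) => P)) (y, g) : Fin (k+2) → P)
        = Fin.cons y g := rfl
    rw [hc]
    simp only [zeta_cons, wt_cons, strictMono_cons_iff, Fin.cons_zero, cons_last]
  have step2 : layer ρ zb (k+1) x z = ∑ g : Fin (k+1) → P,
      if (x < g 0 ∧ StrictMono g) ∧ g (Fin.last k) = z
      then (zb x (g 0) * zetaChain zb g) •
        (((va - vb) ^ (ρ (g 0) - ρ x - 1) * (if 0 < k then vb else 1)) * wtChain ρ g)
      else 0 := by
    rw [step1, Finset.sum_eq_single_of_mem x (Finset.mem_univ x)]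
    · refine Finset.sum_congr rfl fun g _ => if_congr ?_ rfl rfl
      constructor
      · rintro ⟨h1, -, h3⟩; exact ⟨h1, h3⟩
      · rintro ⟨h1, h3⟩; exact ⟨h1, rfl, h3⟩
    · intro y _ hy
      exact Finset.sum_eq_zero fun g _ => if_neg (by rintro ⟨-, rfl, -⟩; exact hy rfl)
  rw [step2]
  have step3 : (∑ g : Fin (k+1) → P,
      if (x < g 0 ∧ StrictMono g) ∧ g (Fin.last k) = z
      then (zb x (g 0) * zetaChain zb g) •
        (((va - vb) ^ (ρ (g 0) - ρ x - 1) * (if 0 < k then vb else 1)) * wtChain ρ g)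
      else 0)
      = ∑ y : P, ∑ g : Fin (k+1) → P, if g 0 = y then
        (if (x < g 0 ∧ StrictMono g) ∧ g (Fin.last k) = z
         then (zb x (g 0) * zetaChain zb g) •
          (((va - vb) ^ (ρ (g 0) - ρ x - 1) * (if 0 < k then vb else 1)) * wtChain ρ g)
         else 0) else 0 := by
    rw [Finset.sum_comm]
    refine Finset.sum_congr rfl fun g _ => ?_
    rw [Finset.sum_ite_eq Finset.univ (g 0)]
    simp
  rw [step3]
  refine Finset.sum_congr rfl fun y _ => ?_
  by_cases hxy : x < y
  · rw [if_pos hxy]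
    rw [show layer ρ zb k y z = ∑ g : Fin (k+1) → P,
      (if StrictMono g ∧ g 0 = y ∧ g (Fin.last k) = z
       then zetaChain zb g • wtChain ρ g else 0) from rfl]
    rw [Finset.mul_sum, Finset.mul_sum, Finset.smul_sum]
    refine Finset.sum_congr rfl fun g _ => ?_
    by_cases h0 : g 0 = y
    · subst h0
      by_cases hC : StrictMono g ∧ g (Fin.last k) = z
      · rw [if_pos rfl,
          if_pos (show (x < g 0 ∧ StrictMono g) ∧ g (Fin.last k) = z from ⟨⟨hxy, hC.1⟩, hC.2⟩),
          if_pos (show StrictMono g ∧ g 0 = g 0 ∧ g (Fin.last k) = z from ⟨hC.1, rfl, hC.2⟩)]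
        simp only [mul_smul, mul_smul_comm]
        rw [mul_assoc]
      · rw [if_pos rfl,
          if_neg (show ¬((x < g 0 ∧ StrictMono g) ∧ g (Fin.last k) = z) from
            by rintro ⟨⟨-, hs⟩, hl⟩; exact hC ⟨hs, hl⟩),
          if_neg (show ¬(StrictMono g ∧ g 0 = g 0 ∧ g (Fin.last k) = z) from
            by rintro ⟨hs, -, hl⟩; exact hC ⟨hs, hl⟩)]
        simp
    · rw [if_neg h0,
        if_neg (show ¬(StrictMono g ∧ g 0 = y ∧ g (Fin.last k) = z) from
          by rintro ⟨-, h, -⟩; exact h0 h)]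
      simp
  · rw [if_neg hxy]
    refine Finset.sum_eq_zero fun g _ => ?_
    by_cases h0 : g 0 = y
    · rw [if_pos h0,
        if_neg (show ¬((x < g 0 ∧ StrictMono g) ∧ g (Fin.last k) = z) from
          by rintro ⟨⟨h, -⟩, -⟩; exact hxy (h0 ▸ h))]
    · rw [if_neg h0]

lemma psi_self (z : P) : PsiI ρ zb z z = 1 := by
  rw [psi_eq_layers, Finset.sum_range_succ', layer_zero, if_pos rfl]
  have h : ∀ k, layer ρ zb (k+1) z z = 0 := by
    intro k
    refine Finset.sum_eq_zero fun f _ => if_neg ?_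
    rintro ⟨hSM, h0, hl⟩
    have hlt : (0 : Fin (k+2)) < Fin.last (k+1) := by
      rw [Fin.lt_def]; simp [Fin.last]
    have := hSM hlt
    rw [h0, hl] at this
    exact lt_irrefl z this
  rw [Finset.sum_eq_zero fun k _ => h k, zero_add]

theorem recR {x z : P} (hxz : x ≠ z) :
    PsiI ρ zb x z = ∑ y : P, if x < y ∧ y ≤ z then
      zb x y • ((va - vb) ^ (ρ y - ρ x - 1) * (if y = z then 1 else vb * PsiI ρ zb y z))
      else 0 := by
  rw [psi_eq_layers, Finset.sum_range_succ', layer_zero, if_neg hxz, add_zero]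
  have hW : ∀ y : P, ∑ k ∈ Finset.range (Fintype.card P),
      (if 0 < k then vb else 1) * layer ρ zb k y z
      = (if y = z then 1 else 0) + vb * (PsiI ρ zb y z - (if y = z then 1 else 0)) := by
    intro y
    have h1 : ∑ k ∈ Finset.range (Fintype.card P), (if 0 < k then vb else 1) * layer ρ zb k y z
        = ∑ k ∈ Finset.range (Fintype.card P + 1),
            (if 0 < k then vb else 1) * layer ρ zb k y z := by
      rw [Finset.sum_range_succ, layer_card, mul_zero, add_zero]
    rw [h1, Finset.sum_range_succ']
    have h2 : ∑ k ∈ Finset.range (Fintype.card P),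
        (if 0 < k + 1 then vb else 1) * layer ρ zb (k+1) y z
        = vb * ∑ k ∈ Finset.range (Fintype.card P), layer ρ zb (k+1) y z := by
      rw [Finset.mul_sum]
      exact Finset.sum_congr rfl fun k _ => by rw [if_pos (Nat.succ_pos k)]
    have h3 : (if (0:ℕ) < 0 then vb else 1) * layer ρ zb 0 y z
        = (if y = z then (1:Alg) else 0) := by
      rw [if_neg (lt_irrefl 0), one_mul, layer_zero]
    have h4 : ∑ k ∈ Finset.range (Fintype.card P), layer ρ zb (k+1) y z
        = PsiI ρ zb y z - (if y = z then 1 else 0) := by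
      rw [psi_eq_layers, Finset.sum_range_succ', layer_zero, add_sub_cancel_right]
    rw [h2, h3, h4, add_comm]
  calc ∑ k ∈ Finset.range (Fintype.card P), layer ρ zb (k+1) x z
      = ∑ k ∈ Finset.range (Fintype.card P), ∑ y : P,
          (if x < y then zb x y • ((va - vb) ^ (ρ y - ρ x - 1) *
            ((if 0 < k then vb else 1) * layer ρ zb k y z)) else 0) :=
        Finset.sum_congr rfl fun k _ => layer_succ ρ zb k x z
    _ = ∑ y : P, ∑ k ∈ Finset.range (Fintype.card P),
          (if x < y then zb x y • ((va - vb) ^ (ρ y - ρ x - 1) *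
            ((if 0 < k then vb else 1) * layer ρ zb k y z)) else 0) := Finset.sum_comm
    _ = ∑ y : P, (if x < y then zb x y • ((va - vb) ^ (ρ y - ρ x - 1) *
          ∑ k ∈ Finset.range (Fintype.card P),
            (if 0 < k then vb else 1) * layer ρ zb k y z) else 0) := by
        refine Finset.sum_congr rfl fun y _ => ?_
        by_cases hxy : x < y
        · simp only [if_pos hxy, Finset.mul_sum, Finset.smul_sum]
        · simp only [if_neg hxy, Finset.sum_const_zero]
    _ = ∑ y : P, (if x < y ∧ y ≤ z then zb x y • ((va - vb) ^ (ρ y - ρ x - 1) *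
          (if y = z then 1 else vb * PsiI ρ zb y z)) else 0) := by
        refine Finset.sum_congr rfl fun y _ => ?_
        rw [hW y]
        by_cases hxy : x < y
        · by_cases hyz : y = z
          · subst hyz
            simp [hxy, psi_self]
          · by_cases hyle : y ≤ z
            · simp [hxy, hyz, hyle]
            · have h0 := psi_not_le ρ zb hyle
              simp [hxy, hyz, hyle, h0]
        · simp [hxy]


lemma euler_sum (hzb : ∀ x : P, zb x x = 1)
    (heul : ∀ x z : P, x < z → ∑ y ∈ Finset.univ.filter (fun y : P => x ≤ y ∧ y ≤ z),
      (-1 : ℤ) ^ (ρ y - ρ x) * zb x y * zb y z = 0)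
    {x w : P} (hxw : x < w) :
    ∑ y : P, (if x < y ∧ y < w then (-1:ℤ)^(ρ y - ρ x) * zb x y * zb y w else 0)
      = -(1 + (-1:ℤ)^(ρ w - ρ x)) * zb x w := by
  have h := heul x w hxw
  rw [Finset.sum_filter] at h
  have hsplit : ∀ y : P, (if x ≤ y ∧ y ≤ w then (-1:ℤ)^(ρ y - ρ x) * zb x y * zb y w else 0)
      = (if y = x then (-1:ℤ)^(ρ y - ρ x) * zb x y * zb y w else 0)
      + ((if y = w then (-1:ℤ)^(ρ y - ρ x) * zb x y * zb y w else 0)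
      + (if x < y ∧ y < w then (-1:ℤ)^(ρ y - ρ x) * zb x y * zb y w else 0)) := by
    intro y
    by_cases h1 : y = x
    · subst h1
      rw [if_pos ⟨le_refl y, le_of_lt hxw⟩, if_pos rfl,
        if_neg (ne_of_lt hxw), if_neg (fun hh => lt_irrefl y hh.1)]
      ring
    · by_cases h2 : y = w
      · subst h2
        rw [if_pos ⟨le_of_lt hxw, le_refl y⟩, if_neg h1, if_pos rfl,
          if_neg (fun hh => lt_irrefl y hh.2)]
        ring
      · by_cases h3 : x ≤ y ∧ y ≤ w
        · rw [if_pos h3, if_neg h1, if_neg h2,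
            if_pos ⟨lt_of_le_of_ne h3.1 (fun he => h1 he.symm), lt_of_le_of_ne h3.2 h2⟩]
          ring
        · rw [if_neg h3, if_neg h1, if_neg h2,
            if_neg (fun hh => h3 ⟨le_of_lt hh.1, le_of_lt hh.2⟩)]
          ring
  rw [Finset.sum_congr rfl (fun y _ => hsplit y), Finset.sum_add_distrib,
    Finset.sum_add_distrib, Finset.sum_ite_eq' Finset.univ x, Finset.sum_ite_eq' Finset.univ w] at h
  rw [if_pos (Finset.mem_univ x), if_pos (Finset.mem_univ w)] at h
  rw [Nat.sub_self, pow_zero, one_mul, hzb x, hzb w, mul_one] at h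
  linear_combination h

theorem main (hρ : StrictMono ρ) (hzb : ∀ x : P, zb x x = 1)
    (heul : ∀ x z : P, x < z → ∑ y ∈ Finset.univ.filter (fun y : P => x ≤ y ∧ y ≤ z),
      (-1 : ℤ) ^ (ρ y - ρ x) * zb x y * zb y z = 0) :
    ∀ n : ℕ, ∀ x z : P, ρ z - ρ x = n →
      sigma (PsiI ρ zb x z) = PsiI ρ zb x z ∧ PsiI ρ zb x z ∈ S := by
  intro n
  induction n using Nat.strong_induction_on with
  | _ n ih =>
  intro x z hn
  rcases eq_or_ne x z with rfl | hxz
  · rw [psi_self]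
    exact ⟨map_one _, one_mem S⟩
  by_cases hxle : x ≤ z
  swap
  · rw [psi_not_le ρ zb hxle]
    exact ⟨map_zero _, zero_mem S⟩
  have hxlt : x < z := lt_of_le_of_ne hxle hxz
  have IHm : ∀ y : P, x < y → y ≤ z →
      sigma (PsiI ρ zb y z) = PsiI ρ zb y z ∧ PsiI ρ zb y z ∈ S := by
    intro y hy hyz
    rcases eq_or_ne y z with rfl | hyzne
    · rw [psi_self]; exact ⟨map_one _, one_mem S⟩
    · have hylt : y < z := lt_of_le_of_ne hyz hyzne
      refine ih (ρ z - ρ y) ?_ y z rfl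
      have h1 := hρ hy; have h2 := hρ hylt
      omega
  have hσe : sigma (va - vb) = -(va - vb) := by
    rw [map_sub, sigma_va, sigma_vb]; abel
  have hσb : sigma vb = (va - vb) + vb := by rw [sigma_vb]; abel
  have h1 : sigma (PsiI ρ zb x z) = ∑ y : P, (if x < y ∧ y ≤ z then
      zb x y • (((-1:ℤ)^(ρ y - ρ x - 1) • ((va - vb)^(ρ y - ρ x - 1))) *
        (if y = z then 1 else ((va - vb) + vb) * PsiI ρ zb y z)) else 0) := by
    rw [recR ρ zb hxz, map_sum]
    refine Finset.sum_congr rfl fun y _ => ?_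
    by_cases hc : x < y ∧ y ≤ z
    · rw [if_pos hc, if_pos hc, map_smul, map_mul, map_pow, hσe]
      have hneg : (-(va - vb))^(ρ y - ρ x - 1)
          = (-1:ℤ)^(ρ y - ρ x - 1) • (va - vb)^(ρ y - ρ x - 1) := by
        rw [show -(va - vb) = (-1:ℤ) • (va - vb) by simp, smul_pow]
      rw [hneg]
      have h2 : sigma (if y = z then 1 else vb * PsiI ρ zb y z)
          = (if y = z then 1 else ((va - vb) + vb) * PsiI ρ zb y z) := by
        by_cases hyz : y = z
        · rw [if_pos hyz, if_pos hyz, map_one]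
        · rw [if_neg hyz, if_neg hyz, map_mul, hσb, (IHm y hc.1 hc.2).1]
      rw [h2]
    · rw [if_neg hc, if_neg hc, map_zero]
  have hexpand : ∀ y : P, x < y → y < z →
      (va - vb)^(ρ y - ρ x) * PsiI ρ zb y z
      = ∑ w : P, (if y < w ∧ w ≤ z then zb y w • ((va - vb)^(ρ w - ρ x - 1) *
          (if w = z then 1 else vb * PsiI ρ zb w z)) else 0) := by
    intro y hxy hyz
    rw [recR ρ zb (ne_of_lt hyz), Finset.mul_sum]
    refine Finset.sum_congr rfl fun w _ => ?_
    by_cases hc : y < w ∧ w ≤ z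
    · rw [if_pos hc, if_pos hc]
      have hexp : (ρ y - ρ x) + (ρ w - ρ y - 1) = ρ w - ρ x - 1 := by
        have h1 := hρ hxy; have h2 := hρ hc.1; omega
      rw [mul_smul_comm, ← mul_assoc, ← pow_add, hexp]
    · rw [if_neg hc, if_neg hc, mul_zero]
  have keyA : ∑ y : P, (if x < y ∧ y < z then
        ((-1:ℤ)^(ρ y - ρ x) * zb x y) • ((va - vb)^(ρ y - ρ x) * PsiI ρ zb y z) else 0)
      = ∑ w : P, (if x < w ∧ w ≤ z then
        (-(1 + (-1:ℤ)^(ρ w - ρ x)) * zb x w) • ((va - vb)^(ρ w - ρ x - 1) *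
          (if w = z then 1 else vb * PsiI ρ zb w z)) else 0) := by
    calc ∑ y : P, (if x < y ∧ y < z then
          ((-1:ℤ)^(ρ y - ρ x) * zb x y) • ((va - vb)^(ρ y - ρ x) * PsiI ρ zb y z) else 0)
        = ∑ y : P, ∑ w : P, (if x < y ∧ y < z then (if y < w ∧ w ≤ z then
            ((-1:ℤ)^(ρ y - ρ x) * zb x y * zb y w) • ((va - vb)^(ρ w - ρ x - 1) *
              (if w = z then 1 else vb * PsiI ρ zb w z)) else 0) else 0) := by
          refine Finset.sum_congr rfl fun y _ => ?_
          by_cases hc : x < y ∧ y < z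
          · rw [if_pos hc, hexpand y hc.1 hc.2, Finset.smul_sum]
            refine Finset.sum_congr rfl fun w _ => ?_
            rw [if_pos hc]
            by_cases hcw : y < w ∧ w ≤ z
            · rw [if_pos hcw, if_pos hcw, smul_smul]
            · rw [if_neg hcw, if_neg hcw, smul_zero]
          · rw [if_neg hc]
            rw [Finset.sum_congr rfl (fun w _ => if_neg hc), Finset.sum_const_zero]
      _ = ∑ w : P, ∑ y : P, (if x < y ∧ y < z then (if y < w ∧ w ≤ z then
            ((-1:ℤ)^(ρ y - ρ x) * zb x y * zb y w) • ((va - vb)^(ρ w - ρ x - 1) *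
              (if w = z then 1 else vb * PsiI ρ zb w z)) else 0) else 0) := Finset.sum_comm
      _ = ∑ w : P, (if x < w ∧ w ≤ z then
            (∑ y : P, (if x < y ∧ y < w then (-1:ℤ)^(ρ y - ρ x) * zb x y * zb y w else 0)) •
              ((va - vb)^(ρ w - ρ x - 1) *
                (if w = z then 1 else vb * PsiI ρ zb w z)) else 0) := by
          refine Finset.sum_congr rfl fun w _ => ?_
          by_cases hcw : x < w ∧ w ≤ z
          · rw [if_pos hcw, Finset.sum_smul]
            refine Finset.sum_congr rfl fun y _ => ?_
            by_cases hcy : x < y ∧ y < w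
            · have hy1 : x < y ∧ y < z := ⟨hcy.1, lt_of_lt_of_le hcy.2 hcw.2⟩
              rw [if_pos hy1, if_pos ⟨hcy.2, hcw.2⟩, if_pos hcy]
            · rw [if_neg hcy, zero_smul]
              by_cases h1 : x < y ∧ y < z
              · rw [if_pos h1, if_neg (fun hh => hcy ⟨h1.1, hh.1⟩)]
              · rw [if_neg h1]
          · rw [if_neg hcw]
            refine Finset.sum_eq_zero fun y _ => ?_
            by_cases h1 : x < y ∧ y < z
            · rw [if_pos h1, if_neg (fun hh => hcw ⟨lt_trans h1.1 hh.1, hh.2⟩)]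
            · rw [if_neg h1]
      _ = ∑ w : P, (if x < w ∧ w ≤ z then
            (-(1 + (-1:ℤ)^(ρ w - ρ x)) * zb x w) • ((va - vb)^(ρ w - ρ x - 1) *
              (if w = z then 1 else vb * PsiI ρ zb w z)) else 0) := by
          refine Finset.sum_congr rfl fun w _ => ?_
          by_cases hcw : x < w ∧ w ≤ z
          · rw [if_pos hcw, if_pos hcw, euler_sum ρ zb hzb heul hcw.1]
          · rw [if_neg hcw, if_neg hcw]
  have hper : ∀ y : P, (if x < y ∧ y ≤ z then
        zb x y • (((-1:ℤ)^(ρ y - ρ x - 1) • ((va - vb)^(ρ y - ρ x - 1))) *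
          (if y = z then 1 else ((va - vb) + vb) * PsiI ρ zb y z)) else 0)
      = (if x < y ∧ y ≤ z then zb x y • ((va - vb)^(ρ y - ρ x - 1) *
          (if y = z then 1 else vb * PsiI ρ zb y z)) else 0)
      - (if x < y ∧ y < z then
          ((-1:ℤ)^(ρ y - ρ x) * zb x y) • ((va - vb)^(ρ y - ρ x) * PsiI ρ zb y z) else 0)
      + (if x < y ∧ y ≤ z then (((-1:ℤ)^(ρ y - ρ x - 1) - 1) * zb x y) •
          ((va - vb)^(ρ y - ρ x - 1) * (if y = z then 1 else vb * PsiI ρ zb y z)) else 0) := by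
    intro y
    by_cases hc : x < y ∧ y ≤ z
    · have hg1 : 1 ≤ ρ y - ρ x := by have := hρ hc.1; omega
      by_cases hyz : y = z
      · simp only [if_pos hc, if_pos hyz,
          if_neg (show ¬(x < y ∧ y < z) from fun hh => by rw [hyz] at hh; exact lt_irrefl z hh.2)]
        simp only [mul_one, sub_zero, smul_mul_assoc]
        module
      · have hylt : y < z := lt_of_le_of_ne hc.2 hyz
        simp only [if_pos hc, if_neg hyz,
          if_pos (show x < y ∧ y < z from ⟨hc.1, hylt⟩)]
        have hmul : (va - vb)^(ρ y - ρ x - 1) * (((va - vb) + vb) * PsiI ρ zb y z)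
            = (va - vb)^(ρ y - ρ x) * PsiI ρ zb y z
              + (va - vb)^(ρ y - ρ x - 1) * (vb * PsiI ρ zb y z) := by
          rw [add_mul, mul_add]
          congr 1
          rw [← mul_assoc, ← pow_succ]
          have he : ρ y - ρ x - 1 + 1 = ρ y - ρ x := by omega
          rw [he]
        have hsign : ((-1:ℤ)^(ρ y - ρ x)) = -((-1:ℤ)^(ρ y - ρ x - 1)) := by
          obtain ⟨m, hm⟩ : ∃ m, ρ y - ρ x = m + 1 := ⟨ρ y - ρ x - 1, by omega⟩
          rw [hm]
          have hm2 : m + 1 - 1 = m := by omega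
          rw [hm2, pow_succ]
          ring
        rw [smul_mul_assoc, hmul, hsign]
        module
    · rw [if_neg hc, if_neg hc, if_neg (fun hh => hc ⟨hh.1, le_of_lt hh.2⟩), if_neg hc]
      simp
  have hsym : sigma (PsiI ρ zb x z) = PsiI ρ zb x z := by
    rw [h1, Finset.sum_congr rfl (fun y _ => hper y), Finset.sum_add_distrib,
      Finset.sum_sub_distrib, keyA, ← recR ρ zb hxz]
    have hKR : ∑ w : P, (if x < w ∧ w ≤ z then
          (-(1 + (-1:ℤ)^(ρ w - ρ x)) * zb x w) • ((va - vb)^(ρ w - ρ x - 1) *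
            (if w = z then 1 else vb * PsiI ρ zb w z)) else 0)
        = ∑ y : P, (if x < y ∧ y ≤ z then (((-1:ℤ)^(ρ y - ρ x - 1) - 1) * zb x y) •
            ((va - vb)^(ρ y - ρ x - 1) * (if y = z then 1 else vb * PsiI ρ zb y z)) else 0) := by
      refine Finset.sum_congr rfl fun w _ => ?_
      by_cases hc : x < w ∧ w ≤ z
      · rw [if_pos hc, if_pos hc]
        have hg1 : 1 ≤ ρ w - ρ x := by have := hρ hc.1; omega
        have hs : -(1 + (-1:ℤ)^(ρ w - ρ x)) = (-1:ℤ)^(ρ w - ρ x - 1) - 1 := by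
          obtain ⟨m, hm⟩ : ∃ m, ρ w - ρ x = m + 1 := ⟨ρ w - ρ x - 1, by omega⟩
          rw [hm]
          have hm2 : m + 1 - 1 = m := by omega
          rw [hm2, pow_succ]
          ring
        rw [hs]
      · rw [if_neg hc, if_neg hc]
    rw [hKR]
    abel
  refine ⟨hsym, mem_S_of_inV_sigma ?_ hsym⟩
  rw [recR ρ zb hxz]
  refine InV.sum _ _ fun y _ => ?_
  by_cases hc : x < y ∧ y ≤ z
  · rw [if_pos hc]
    refine InV.zsmul _ ?_
    by_cases hyz : y = z
    · rw [if_pos hyz]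
      exact inV_e_pow_mul (ρ y - ρ x - 1) (one_mem S)
    · rw [if_neg hyz]
      exact inV_e_pow_mul_vb_mul (ρ y - ρ x - 1) (IHm y hc.1 hc.2).2
  · rw [if_neg hc]
    exact InV.zero

end CD

end
/-- the ab-index of an Eulerian quasi-graded poset is a polynomial
in `c = a+b` and `d = ab+ba` with integer coefficients. -/
theorem abIndex_mem_cd {P : Type} [Fintype P] [PartialOrder P] [BoundedOrder P]
    (ρ : P → ℕ) (zb : P → P → ℤ) (hρ0 : ρ ⊥ = 0) (hρ : StrictMono ρ)
    (hzb : ∀ x : P, zb x x = 1)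
    (heul : ∀ x z : P, x < z →
      ∑ y ∈ Finset.univ.filter (fun y : P => x ≤ y ∧ y ≤ z),
        (-1 : ℤ) ^ (ρ y - ρ x) * zb x y * zb y z = 0) :
    PsiI ρ zb ⊥ ⊤ ∈ Algebra.adjoin ℤ ({va + vb, va * vb + vb * va} : Set Alg) := by
  rcases eq_or_ne (⊥ : P) (⊤ : P) with h | h
  · rw [h, CD.psi_self]
    exact one_mem _
  · exact (CD.main ρ zb hρ hzb heul (ρ ⊤ - ρ ⊥) ⊥ ⊤ rfl).2
end

section
/- The ab-index of the dual of a quasi-graded poset equals the reverse of its ab-index: Ψ(P*, ρ*, ζ̄*) = Ψ(P, ρ, ζ̄)*, where on monomials (u_1 u_2 ⋯ u_n)* = u_n ⋯ u_2 u_1. -/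
open scoped TensorProduct
open scoped Classical

namespace AbDualAux

def revW (w : FreeMonoid Bool) : FreeMonoid Bool :=
  FreeMonoid.ofList (FreeMonoid.toList w).reverse

lemma revOp_eq (x : Alg) : revOp x =
    MonoidAlgebra.ofCoeff (Finsupp.mapDomain revW x.coeff) := by
  rw [Finsupp.mapDomain, MonoidAlgebra.ofCoeff_finsuppSum]; rfl

lemma revOp_zero : revOp 0 = 0 := by simp [revOp_eq]

lemma revOp_add (x y : Alg) : revOp (x + y) = revOp x + revOp y := by
  rw [revOp_eq, revOp_eq, revOp_eq]
  exact congrArg MonoidAlgebra.ofCoeff Finsupp.mapDomain_add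

lemma revOp_smul (z : ℤ) (x : Alg) : revOp (z • x) = z • revOp x := by
  rw [revOp_eq, revOp_eq]
  exact congrArg MonoidAlgebra.ofCoeff (Finsupp.mapDomain_smul z x.coeff)

lemma revOp_single (w : FreeMonoid Bool) (c : ℤ) :
    revOp (MonoidAlgebra.single w c) = MonoidAlgebra.single (revW w) c := by
  simp [revOp_eq, Finsupp.mapDomain_single]

lemma revW_mul (w w' : FreeMonoid Bool) : revW (w * w') = revW w' * revW w := by
  simp [revW]

lemma revW_one : revW 1 = 1 := rfl

lemma revOp_one : revOp (1 : Alg) = 1 := by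
  rw [show (1 : Alg) = MonoidAlgebra.single 1 1 from rfl, revOp_single, revW_one]

lemma alg_induction (p : Alg → Prop) (h0 : p 0)
    (hadd : ∀ x y : Alg, p x → p y → p (x + y))
    (hs : ∀ (w : FreeMonoid Bool) (c : ℤ), p (MonoidAlgebra.single w c)) (x : Alg) : p x :=
  MonoidAlgebra.induction_linear x h0 hadd hs

lemma revOp_mul (x y : Alg) : revOp (x * y) = revOp y * revOp x := by
  induction x using alg_induction with
  | h0 => simp [revOp_zero]
  | hadd a b ha hb => rw [add_mul, revOp_add, ha, hb, revOp_add, mul_add]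
  | hs w c =>
      induction y using alg_induction with
      | h0 => simp [revOp_zero]
      | hadd a b ha hb => rw [mul_add, revOp_add, ha, hb, revOp_add, add_mul]
      | hs w' c' =>
          rw [MonoidAlgebra.single_mul_single, revOp_single, revOp_single, revOp_single,
            MonoidAlgebra.single_mul_single, revW_mul, mul_comm c]

lemma revOp_pow (x : Alg) (n : ℕ) : revOp (x ^ n) = revOp x ^ n := by
  induction n with
  | zero => simpa using revOp_one
  | succ n ih => rw [pow_succ, revOp_mul, ih, pow_succ']

lemma revOp_neg (x : Alg) : revOp (-x) = - revOp x := by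
  rw [← neg_one_zsmul, revOp_smul, neg_one_zsmul]

lemma revOp_sub (x y : Alg) : revOp (x - y) = revOp x - revOp y := by
  rw [sub_eq_add_neg, sub_eq_add_neg, revOp_add, revOp_neg]

lemma revW_of (s : Bool) : revW (FreeMonoid.of s) = FreeMonoid.of s := rfl

lemma revOp_va : revOp va = va := by
  rw [show va = MonoidAlgebra.single (FreeMonoid.of false) 1 from rfl, revOp_single, revW_of]

lemma revOp_vb : revOp vb = vb := by
  rw [show vb = MonoidAlgebra.single (FreeMonoid.of true) 1 from rfl, revOp_single, revW_of]

lemma revOp_ab : revOp (va - vb) = va - vb := by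
  rw [revOp_sub, revOp_va, revOp_vb]

lemma revOp_listProd (l : List Alg) : revOp l.prod = (l.reverse.map revOp).prod := by
  induction l with
  | nil => simpa using revOp_one
  | cons h t ih => simp [revOp_mul, ih]

noncomputable def revH : Alg →+ Alg :=
  MonoidAlgebra.coeffAddEquiv.symm.toAddMonoidHom.comp
    ((Finsupp.mapDomain.addMonoidHom revW).comp MonoidAlgebra.coeffAddEquiv.toAddMonoidHom)

lemma revOp_sum {ι : Type*} (s : Finset ι) (g : ι → Alg) :
    revOp (∑ i ∈ s, g i) = ∑ i ∈ s, revOp (g i) :=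
  by simp only [revOp_eq]; exact map_sum revH g s

lemma ofFn_reverse : ∀ (n : ℕ) (f : Fin n → Alg),
    (List.ofFn f).reverse = List.ofFn (fun i => f i.rev)
  | 0, _ => by simp
  | (n+1), f => by
      rw [List.ofFn_succ, List.reverse_cons, ofFn_reverse n (fun i => f i.succ),
        List.ofFn_succ' (fun i : Fin (n+1) => f i.rev)]
      simp [Fin.rev_castSucc, Fin.rev_last, List.concat_eq_append]

lemma prod_aux : ∀ (k : ℕ) (X : ℕ → Alg),
    (List.ofFn (fun i : Fin k => X (i : ℕ) * vb)).prod * X k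
      = X 0 * (List.ofFn (fun i : Fin k => vb * X ((i : ℕ) + 1))).prod
  | 0, X => by simp
  | (k+1), X => by
      rw [List.ofFn_succ' (fun i : Fin (k+1) => X (i : ℕ) * vb),
        List.ofFn_succ' (fun i : Fin (k+1) => vb * X ((i : ℕ) + 1))]
      simp only [Fin.coe_castSucc, Fin.val_last, List.concat_eq_append, List.prod_append,
        List.prod_cons, List.prod_nil, mul_one]
      rw [← mul_assoc, ← mul_assoc, prod_aux k X, mul_assoc, mul_assoc]

lemma prod_shift : ∀ (k : ℕ) (X : ℕ → Alg),
    (List.ofFn (fun i : Fin k => X (i : ℕ) * (if (i : ℕ) + 1 < k then vb else 1))).prod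
      = (List.ofFn (fun i : Fin k => (if 0 < (i : ℕ) then vb else 1) * X (i : ℕ))).prod
  | 0, X => by simp
  | (k+1), X => by
      rw [List.ofFn_succ' (fun i : Fin (k+1) => X (i : ℕ) * (if (i : ℕ) + 1 < k+1 then vb else 1)),
        List.ofFn_succ (f := fun i : Fin (k+1) => (if 0 < (i : ℕ) then vb else 1) * X (i : ℕ))]
      have h1 : (fun i : Fin k => X ((i.castSucc : Fin (k+1)) : ℕ) *
          (if ((i.castSucc : Fin (k+1)) : ℕ) + 1 < k+1 then vb else 1))
          = fun i : Fin k => X (i : ℕ) * vb := by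
        funext i
        simp only [Fin.coe_castSucc, if_pos (Nat.succ_lt_succ i.isLt)]
      have h2 : (fun i : Fin k => (if 0 < ((i.succ : Fin (k+1)) : ℕ) then vb else 1) *
          X ((i.succ : Fin (k+1)) : ℕ)) = fun i : Fin k => vb * X ((i : ℕ) + 1) := by
        funext i
        simp
      rw [h1, h2]
      simp only [Fin.val_last, Fin.val_zero, lt_self_iff_false, if_false,
        List.concat_eq_append, List.prod_append, List.prod_cons, List.prod_nil,
        mul_one, one_mul]
      exact prod_aux k X

def dualE {P : Type} (k : ℕ) : (Fin (k+1) → P) ≃ (Fin (k+1) → Pᵒᵈ) where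
  toFun f j := OrderDual.toDual (f j.rev)
  invFun g j := OrderDual.ofDual (g j.rev)
  left_inv f := by funext j; simp
  right_inv g := by funext j; simp

end AbDualAux

open AbDualAux in
/-- the ab-index of the dual quasi-graded poset is the reverse of
the ab-index: `Ψ(P*, ρ*, ζ̄*) = Ψ(P, ρ, ζ̄)*`. -/
theorem abIndex_dual {P : Type} [Fintype P] [PartialOrder P] [BoundedOrder P]
    (ρ : P → ℕ) (zb : P → P → ℤ) (hρ0 : ρ ⊥ = 0) (hρ : StrictMono ρ)
    (hzb : ∀ x : P, zb x x = 1) :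
    PsiI (P := Pᵒᵈ) (fun x => ρ (⊤ : P) - ρ (OrderDual.ofDual x))
        (fun x y => zb (OrderDual.ofDual y) (OrderDual.ofDual x)) ⊥ ⊤
      = revOp (PsiI ρ zb ⊥ ⊤) := by
  classical
  unfold PsiI
  rw [revOp_sum]
  refine Finset.sum_congr rfl fun k _ => ?_
  rw [revOp_sum, ← Equiv.sum_comp (dualE (P := P) k)]
  refine Finset.sum_congr rfl fun f _ => ?_
  have hde : ∀ j : Fin (k+1), dualE (P := P) k f j = OrderDual.toDual (f j.rev) := fun _ => rfl
  have hsm : StrictMono (dualE (P := P) k f) ↔ StrictMono f := by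
    constructor
    · intro h i j hij
      have := h (show j.rev < i.rev from Fin.rev_lt_rev.mpr hij)
      simp only [hde, Fin.rev_rev, OrderDual.toDual_lt_toDual] at this
      exact this
    · intro h i j hij
      simp only [hde, OrderDual.toDual_lt_toDual]
      exact h (Fin.rev_lt_rev.mpr hij)
  have h0 : dualE (P := P) k f 0 = (⊥ : Pᵒᵈ) ↔ f (Fin.last k) = ⊤ := by
    rw [hde]
    have hrv : (0 : Fin (k+1)).rev = Fin.last k := by simp
    rw [hrv]
    constructor
    · intro h; exact OrderDual.toDual.injective h
    · intro h; rw [h]; rfl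
  have hl : dualE (P := P) k f (Fin.last k) = (⊤ : Pᵒᵈ) ↔ f 0 = ⊥ := by
    rw [hde]
    have hrv : (Fin.last k).rev = (0 : Fin (k+1)) := by simp
    rw [hrv]
    constructor
    · intro h; exact OrderDual.toDual.injective h
    · intro h; rw [h]; rfl
  have hcond : (StrictMono (dualE (P := P) k f) ∧ dualE (P := P) k f 0 = (⊥ : Pᵒᵈ) ∧
      dualE (P := P) k f (Fin.last k) = (⊤ : Pᵒᵈ))
      ↔ (StrictMono f ∧ f 0 = ⊥ ∧ f (Fin.last k) = ⊤) := by
    rw [hsm, h0, hl]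
    tauto
  by_cases hc : StrictMono f ∧ f 0 = ⊥ ∧ f (Fin.last k) = ⊤
  · rw [if_pos (hcond.mpr hc), if_pos hc]
    obtain ⟨hmono, -, -⟩ := hc
    have hz : zetaChain (fun x y : Pᵒᵈ => zb (OrderDual.ofDual y) (OrderDual.ofDual x))
        (dualE (P := P) k f) = zetaChain zb f := by
      unfold zetaChain
      rw [← Equiv.prod_comp (Fin.revPerm (n := k))
        (fun j : Fin k => zb (f j.castSucc) (f j.succ))]
      refine Finset.prod_congr rfl fun i _ => ?_
      simp only [hde, Fin.revPerm_apply, Fin.rev_succ, Fin.rev_castSucc, OrderDual.ofDual_toDual]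
    have hwt : wtChain (fun x : Pᵒᵈ => ρ (⊤ : P) - ρ (OrderDual.ofDual x))
        (dualE (P := P) k f) = revOp (wtChain ρ f) := by
      unfold wtChain
      set A : Fin k → Alg := fun j => (va - vb) ^ (ρ (f j.succ) - ρ (f j.castSucc) - 1) with hA
      have hb : ∀ j : Fin (k+1), ρ (f j) ≤ ρ (⊤ : P) := fun j => hρ.monotone le_top
      have hdualfn : (fun i : Fin k =>
          (va - vb) ^ ((fun x : Pᵒᵈ => ρ (⊤ : P) - ρ (OrderDual.ofDual x))
              ((dualE (P := P) k f) i.succ)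
            - (fun x : Pᵒᵈ => ρ (⊤ : P) - ρ (OrderDual.ofDual x))
              ((dualE (P := P) k f) i.castSucc) - 1) *
            (if (i : ℕ) + 1 < k then vb else 1))
          = fun i : Fin k => A i.rev * (if (i : ℕ) + 1 < k then vb else 1) := by
        funext i
        simp only [hde, OrderDual.ofDual_toDual, Fin.rev_succ, Fin.rev_castSucc, hA]
        congr 2
        have h1 : ρ (f i.rev.castSucc) < ρ (f i.rev.succ) :=
          hρ (hmono (Fin.castSucc_lt_succ (i := i.rev)))
        have h2 := hb i.rev.succ
        omega
      rw [hdualfn]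
      rw [revOp_listProd, List.map_reverse, List.map_ofFn, ofFn_reverse]
      have hrevfn : (fun i : Fin k =>
          ((revOp ∘ fun i : Fin k => (va - vb) ^ (ρ (f i.succ) - ρ (f i.castSucc) - 1) *
            (if (i : ℕ) + 1 < k then vb else 1)) i.rev))
          = fun i : Fin k => (if 0 < (i : ℕ) then vb else 1) * A i.rev := by
        funext i
        simp only [Function.comp_apply, revOp_mul]
        have hv : ((i.rev : Fin k) : ℕ) = k - ((i : ℕ) + 1) := Fin.val_rev i
        have hrb : revOp (if ((i.rev : Fin k) : ℕ) + 1 < k then vb else (1:Alg))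
            = (if 0 < (i : ℕ) then vb else 1) := by
          by_cases h : 0 < (i : ℕ)
          · have hlt : ((i.rev : Fin k) : ℕ) + 1 < k := by
              have := i.isLt; omega
            rw [if_pos hlt, if_pos h, revOp_vb]
          · have hlt : ¬ (((i.rev : Fin k) : ℕ) + 1 < k) := by
              have := i.isLt; omega
            rw [if_neg hlt, if_neg h, revOp_one]
        rw [hrb, revOp_pow, revOp_ab, hA]
      rw [hrevfn]
      obtain ⟨X, hX⟩ : ∃ X : ℕ → Alg, ∀ i : Fin k, X (i : ℕ) = A i.rev := by
        refine ⟨fun n => if h : n < k then A (Fin.rev ⟨n, h⟩) else 1, fun i => ?_⟩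
        show (if h : (i : ℕ) < k then A (Fin.rev ⟨(i : ℕ), h⟩) else 1) = A i.rev
        rw [dif_pos i.isLt]
      have e1 : (fun i : Fin k => A i.rev * (if (i : ℕ) + 1 < k then vb else 1))
          = fun i : Fin k => X (i : ℕ) * (if (i : ℕ) + 1 < k then vb else 1) := by
        funext i; rw [hX]
      have e2 : (fun i : Fin k => (if 0 < (i : ℕ) then vb else 1) * A i.rev)
          = fun i : Fin k => (if 0 < (i : ℕ) then vb else 1) * X (i : ℕ) := by
        funext i; rw [hX]
      rw [e1, e2]
      exact prod_shift k X
    rw [hz, hwt, revOp_smul]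
  · rw [if_neg (fun h => hc (hcond.mp h)), if_neg hc, revOp_zero]
end

section
/- Let P be a graded intersection poset of a spherical arrangement, i.e., every element x with 0̂ < x < 1̂ is a sphere and χ(x) = 1 + (−1)^{dim x}, where ρ(x) + dim(x) is constant on P − {1̂}. Then the manifold Zaslavsky invariant equals the Zaslavsky invariant on every upper interval: Z_M([y,1̂]; χ) = Σ_{y ≤ x ≤ 1̂} (−1)^{ρ(y,x)} μ(y,x) χ(x) = Σ_{y ≤ x ≤ 1̂} (−1)^{ρ(y,x)} μ(y,x) = Z([y,1̂]). -/
open scoped TensorProduct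
open scoped Classical

/-- for the graded intersection poset of a spherical arrangement
(every proper element a sphere, `χ(x) = 1 + (-1)^{dim x}`, `ρ + dim` constant),
the manifold Zaslavsky invariant equals the Zaslavsky invariant on every upper
interval `[y, 1̂]` with `y < 1̂`. -/
theorem spherical_ZM_eq_Z {P : Type} [Fintype P] [PartialOrder P] [BoundedOrder P]
    [DecidableEq P] [LocallyFiniteOrder P]
    (n : ℤ) (ρ : P → ℕ) (dimfun : P → ℤ) (χfun : P → ℤ)
    (hρ : StrictMono ρ)
    (hχ : ∀ x : P, χfun x = if Even (dimfun x) then 2 else 0)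
    (hconst : ∀ x : P, (ρ x : ℤ) + dimfun x = n)
    (y : P) (hy : y < ⊤) :
    ∑ x ∈ Finset.univ.filter (fun x : P => y ≤ x),
        (-1 : ℤ) ^ (ρ x - ρ y) * IncidenceAlgebra.mu ℤ y x * χfun x
      = ∑ x ∈ Finset.univ.filter (fun x : P => y ≤ x),
          (-1 : ℤ) ^ (ρ x - ρ y) * IncidenceAlgebra.mu ℤ y x := by
  have hset : Finset.univ.filter (fun x : P => y ≤ x) = Finset.Icc y ⊤ := by
    ext x; simp [le_top]
  rw [← sub_eq_zero, ← Finset.sum_sub_distrib]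
  have key : ∀ x ∈ Finset.univ.filter (fun x : P => y ≤ x),
      (-1 : ℤ) ^ (ρ x - ρ y) * IncidenceAlgebra.mu ℤ y x * χfun x
        - (-1 : ℤ) ^ (ρ x - ρ y) * IncidenceAlgebra.mu ℤ y x
      = (if Even (n - (ρ y : ℤ)) then 1 else -1) * IncidenceAlgebra.mu ℤ y x := by
    intro x hx
    simp only [Finset.mem_filter] at hx
    have hle : ρ y ≤ ρ x := hρ.monotone hx.2
    have hd : dimfun x = n - (ρ x : ℤ) := by linarith [hconst x]
    have hcast : ((ρ x - ρ y : ℕ) : ℤ) = (ρ x : ℤ) - ρ y := by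
      omega
    have hsign : (-1 : ℤ) ^ (ρ x - ρ y) * (χfun x - 1)
        = (if Even (n - (ρ y : ℤ)) then 1 else -1) := by
      rw [hχ, hd]
      rcases Nat.even_or_odd (ρ x - ρ y) with he | ho
      · rw [he.neg_one_pow]
        have : Even ((ρ x : ℤ) - ρ y) := by
          rw [← hcast]; exact_mod_cast he.natCast (α := ℤ)
        have hiff : Even (n - (ρ x : ℤ)) ↔ Even (n - (ρ y : ℤ)) := by
          constructor <;> intro h
          · have := h.add this; simpa [sub_add_sub_cancel] using this
          · have := h.sub this; simpa [sub_sub_sub_cancel_right] using this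
        by_cases hev : Even (n - (ρ y : ℤ)) <;> simp [hiff, hev]
      · rw [ho.neg_one_pow]
        have hoZ : Odd ((ρ x : ℤ) - ρ y) := by
          rw [← hcast]; exact_mod_cast ho.natCast
        have hiff : Even (n - (ρ x : ℤ)) ↔ ¬ Even (n - (ρ y : ℤ)) := by
          rw [Int.even_sub, Int.even_sub]
          rcases Int.even_or_odd (ρ x : ℤ) with h1 | h1 <;>
            rcases Int.even_or_odd (ρ y : ℤ) with h2 | h2 <;>
            rcases Int.even_or_odd n with h3 | h3 <;>
            simp_all [Int.even_sub, Int.even_iff, Int.odd_iff, Int.not_odd_iff_even] <;> omega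
        by_cases hev : Even (n - (ρ y : ℤ)) <;> simp [hiff, hev]
    calc (-1 : ℤ) ^ (ρ x - ρ y) * IncidenceAlgebra.mu ℤ y x * χfun x
        - (-1 : ℤ) ^ (ρ x - ρ y) * IncidenceAlgebra.mu ℤ y x
        = ((-1 : ℤ) ^ (ρ x - ρ y) * (χfun x - 1)) * IncidenceAlgebra.mu ℤ y x := by ring
      _ = _ := by rw [hsign]
  rw [Finset.sum_congr rfl key, ← Finset.mul_sum, hset,
    IncidenceAlgebra.sum_Icc_mu_right]
  simp [hy.ne]
end
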